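/- For any constants a₂, b₁ > 0 and c₁ ∈ ℝ, the equation 4·a₂·b₁·x = c₁·φ(x) has exactly one real solution x, where φ is the standard sigmoid. -/

import Mathlib

noncomputable def phi (z : ℝ) : ℝ := 1 / (1 + Real.exp (-z))

lemma g_hasDeriv (t : ℝ) : HasDerivAt (fun t : ℝ => t * (1 + Real.exp (-t)))
    (1 + (1 - t) * Real.exp (-t)) t := by
  have h1 : HasDerivAt (fun t : ℝ => Real.exp (-t)) (-Real.exp (-t)) t := by
    convert (hasDerivAt_neg t).exp using 1; ring
  have h2 : HasDerivAt (fun t : ℝ => 1 + Real.exp (-t)) (-Real.exp (-t)) t := by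
    exact h1.const_add 1
  have h3 : HasDerivAt (fun y : ℝ => y * (1 + Real.exp (-y))) (1 * (1 + Real.exp (-t)) + t * -Real.exp (-t)) t :=
    (hasDerivAt_id' t).mul h2
  convert h3 using 1
  ring

lemma g_strictMono : StrictMono (fun t : ℝ => t * (1 + Real.exp (-t))) := by
  apply strictMono_of_deriv_pos
  intro t
  rw [(g_hasDeriv t).deriv]
  have h := Real.add_one_le_exp t
  have h2 := Real.exp_pos (-t)
  have h3 : Real.exp (-t) * Real.exp t = 1 := by
    rw [← Real.exp_add]; simp
  nlinarith [Real.exp_pos t]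

lemma g_cont : Continuous (fun t : ℝ => t * (1 + Real.exp (-t))) := by
  continuity

/-- For a₂, b₁ > 0 and any c₁ ∈ ℝ, the equation 4·a₂·b₁·x = c₁·φ(x) has exactly
one real solution. -/
theorem unique_solution_one_synapse (a₂ b₁ c₁ : ℝ) (ha₂ : 0 < a₂) (hb₁ : 0 < b₁) :
    ∃! x : ℝ, 4 * a₂ * b₁ * x = c₁ * phi x := by
  set k := 4 * a₂ * b₁ with hk
  have hkpos : 0 < k := by positivity
  set g := fun t : ℝ => t * (1 + Real.exp (-t)) with hg
  -- equivalence of equations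
  have key : ∀ x : ℝ, (k * x = c₁ * phi x) ↔ k * g x = c₁ := by
    intro x
    have hE : 0 < 1 + Real.exp (-x) := by positivity
    have hphi : phi x * (1 + Real.exp (-x)) = 1 := by
      rw [phi]; field_simp
    have hiff : k * x = c₁ * phi x ↔
        k * x * (1 + Real.exp (-x)) = c₁ * phi x * (1 + Real.exp (-x)) :=
      (mul_left_inj' (ne_of_gt hE)).symm
    rw [hiff, mul_assoc c₁, hphi, mul_one, hg]
    simp only
    constructor <;> intro h <;> linear_combination h
  -- existence via IVT
  set M := (|c₁| + 1) / k with hM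
  have hMpos : 0 < M := by positivity
  have hkM : k * M = |c₁| + 1 := by
    rw [hM]; field_simp
  have h1 : k * g (-M) ≤ c₁ := by
    have hgle : g (-M) ≤ -M := by
      simp only [hg, neg_neg]
      nlinarith [Real.exp_pos M]
    have h4 : k * g (-M) ≤ k * (-M) :=
      mul_le_mul_of_nonneg_left hgle (le_of_lt hkpos)
    have habs := neg_abs_le c₁
    nlinarith
  have h2 : c₁ ≤ k * g M := by
    have hgge : M ≤ g M := by
      simp only [hg]
      nlinarith [Real.exp_pos (-M)]
    have h4 : k * M ≤ k * g M := mul_le_mul_of_nonneg_left hgge (le_of_lt hkpos)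
    have habs := le_abs_self c₁
    nlinarith
  have hcont : ContinuousOn (fun t => k * g t) (Set.Icc (-M) M) :=
    (continuous_const.mul g_cont).continuousOn
  have hmem : c₁ ∈ Set.Icc (k * g (-M)) (k * g M) := ⟨h1, h2⟩
  obtain ⟨x, _, hx⟩ := intermediate_value_Icc (by linarith : (-M : ℝ) ≤ M) hcont hmem
  have hx' : k * g x = c₁ := hx
  refine ⟨x, (key x).mpr hx', ?_⟩
  intro y hy
  have hyx : k * g y = k * g x := by
    rw [(key y).mp hy, hx']
  exact g_strictMono.injective (mul_left_cancel₀ (ne_of_gt hkpos) hyx)
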